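/- arXiv:0712.1180 — 5 statements merged into one kernel-verified Lean document; each statement's English description precedes it below -/
import Mathlib

section
/- Let U ⊆ ℝᵐ be open and B : U → GL(m, ℝ) a C² map with right Cartan connection C_x(v) = B(x)⁻¹ · (DB(x))(v) and affine torsion 2-forms T_x(u, v) = C_x(u)·v − C_x(v)·u. Then the exterior derivative of the affine torsion (the 'fluid mass-current' 3-form) satisfies, for all x ∈ U and u, v, w ∈ ℝᵐ: the cyclic sum over (u, v, w) of D(x ↦ T_x(v, w))(x)(u) equals minus the cyclic sum over (u, v, w) of (C_x(u)·C_x(v) − C_x(v)·C_x(u))·w; that is, d(C∧dx) = dC∧dx = −(C∧C)∧dx. -/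
attribute [local instance] Matrix.normedAddCommGroup Matrix.normedSpace

open scoped Matrix

/-- The right Cartan connection of a basis frame `B`: `C_x(v) = B(x)⁻¹ · (DB(x))(v)`. -/
noncomputable def rightCartan {m : ℕ} (B : (Fin m → ℝ) → Matrix (Fin m) (Fin m) ℝ)
    (x v : Fin m → ℝ) : Matrix (Fin m) (Fin m) ℝ :=
  (B x)⁻¹ * fderiv ℝ B x v

/-- The vector of affine torsion 2-forms `T = C ∧ dx` of the right Cartan connection:
`T_x(u,v) = C_x(u)·v − C_x(v)·u`. -/
noncomputable def affineTorsion {m : ℕ} (B : (Fin m → ℝ) → Matrix (Fin m) (Fin m) ℝ)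
    (x u v : Fin m → ℝ) : Fin m → ℝ :=
  rightCartan B x u *ᵥ v - rightCartan B x v *ᵥ u


noncomputable instance instTopMatrixNormed (m : ℕ) :
    TopologicalSpace (Matrix (Fin m) (Fin m) ℝ) :=
  PseudoMetricSpace.toUniformSpace.toTopologicalSpace

noncomputable def matMulL (m : ℕ) :
    Matrix (Fin m) (Fin m) ℝ →L[ℝ] Matrix (Fin m) (Fin m) ℝ →L[ℝ] Matrix (Fin m) (Fin m) ℝ :=
  LinearMap.toContinuousLinearMap
    ((LinearMap.toContinuousLinearMap :
        (Matrix (Fin m) (Fin m) ℝ →ₗ[ℝ] Matrix (Fin m) (Fin m) ℝ) ≃ₗ[ℝ]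
          (Matrix (Fin m) (Fin m) ℝ →L[ℝ] Matrix (Fin m) (Fin m) ℝ)).toLinearMap.comp
      (LinearMap.mul ℝ (Matrix (Fin m) (Fin m) ℝ)))

@[simp] lemma matMulL_apply {m : ℕ} (A C : Matrix (Fin m) (Fin m) ℝ) :
    matMulL m A C = A * C := rfl

noncomputable def mulVecL {m : ℕ} (w : Fin m → ℝ) :
    Matrix (Fin m) (Fin m) ℝ →L[ℝ] (Fin m → ℝ) :=
  LinearMap.toContinuousLinearMap
    { toFun := fun A => A *ᵥ w
      map_add' := fun A C => Matrix.add_mulVec A C w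
      map_smul' := fun c A => Matrix.smul_mulVec c A w }

@[simp] lemma mulVecL_apply {m : ℕ} (w : Fin m → ℝ) (A : Matrix (Fin m) (Fin m) ℝ) :
    mulVecL w A = A *ᵥ w := rfl

lemma contDiff_matrix_det {m : ℕ} {n : ℕ∞} :
    ContDiff ℝ n fun A : Matrix (Fin m) (Fin m) ℝ => A.det := by
  simp_rw [Matrix.det_apply']
  apply ContDiff.sum
  intro σ _
  exact ContDiff.mul contDiff_const (contDiff_prod fun i _ => contDiff_apply_apply ℝ ℝ (σ i) i)

lemma contDiff_matrix_adjugate {m : ℕ} {n : ℕ∞} :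
    ContDiff ℝ n fun A : Matrix (Fin m) (Fin m) ℝ => A.adjugate := by
  apply contDiff_pi.2
  intro i
  apply contDiff_pi.2
  intro j
  simp_rw [Matrix.adjugate_apply]
  apply contDiff_matrix_det.comp
  apply contDiff_pi.2
  intro k
  apply contDiff_pi.2
  intro l
  simp_rw [Matrix.updateRow_apply]
  rcases eq_or_ne k j with h | h
  · simp only [h, if_true]
    exact contDiff_const
  · simp only [h, if_false]
    exact contDiff_apply_apply ℝ ℝ k l

lemma contDiffAt_matrix_inv {m : ℕ} {n : ℕ∞} (A : Matrix (Fin m) (Fin m) ℝ) (hA : IsUnit A) :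
    ContDiffAt ℝ n Inv.inv A := by
  have hdet : A.det ≠ 0 := isUnit_iff_ne_zero.1 ((Matrix.isUnit_iff_isUnit_det A).1 hA)
  have h1 : ContDiffAt ℝ n (fun B : Matrix (Fin m) (Fin m) ℝ => (B.det)⁻¹ • B.adjugate) A :=
    ContDiffAt.smul ((contDiffAt_inv ℝ hdet).comp A contDiff_matrix_det.contDiffAt)
      contDiff_matrix_adjugate.contDiffAt
  apply h1.congr_of_eventuallyEq
  filter_upwards with B
  rw [Matrix.inv_def, Ring.inverse_eq_inv']


/-- For a C² frame field `B : U → GL(m, ℝ)` on an open `U ⊆ ℝᵐ`, the exterior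
derivative of the affine torsion satisfies `d(C∧dx) = dC∧dx = −(C∧C)∧dx`: the cyclic sum
over `(u,v,w)` of `D(x ↦ T_x(v,w))(x)(u)` equals minus the cyclic sum over `(u,v,w)` of
`(C_x(u)·C_x(v) − C_x(v)·C_x(u))·w`. -/
theorem affineTorsion_exterior_derivative (m : ℕ) (hm : 1 ≤ m)
    (U : Set (Fin m → ℝ)) (hU : IsOpen U)
    (B : (Fin m → ℝ) → Matrix (Fin m) (Fin m) ℝ)
    (hB : ContDiffOn ℝ 2 B U)
    (hBinv : ∀ x ∈ U, IsUnit (B x)) :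
    ∀ x ∈ U, ∀ u v w : Fin m → ℝ,
      fderiv ℝ (fun y => affineTorsion B y v w) x u
        + fderiv ℝ (fun y => affineTorsion B y w u) x v
        + fderiv ℝ (fun y => affineTorsion B y u v) x w
      = -((rightCartan B x u * rightCartan B x v
              - rightCartan B x v * rightCartan B x u) *ᵥ w
          + (rightCartan B x v * rightCartan B x w
              - rightCartan B x w * rightCartan B x v) *ᵥ u
          + (rightCartan B x w * rightCartan B x u
              - rightCartan B x u * rightCartan B x w) *ᵥ v) := by
  intro x hx u v w
  have hxU : U ∈ nhds x := hU.mem_nhds hx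
  have hB2 : ContDiffAt ℝ 2 B x := hB.contDiffAt hxU
  have hBdiffAt : DifferentiableAt ℝ B x := hB2.differentiableAt two_ne_zero
  have hf' : ContDiffAt ℝ 1 (fderiv ℝ B) x := hB2.fderiv_right (by norm_num)
  have hf'diff : DifferentiableAt ℝ (fderiv ℝ B) x := hf'.differentiableAt one_ne_zero
  set f'' := fderiv ℝ (fderiv ℝ B) x with hf''def
  have hBev : ∀ᶠ y in nhds x, HasFDerivAt B (fderiv ℝ B y) y := by
    filter_upwards [hxU] with y hy
    exact ((hB.differentiableOn two_ne_zero).differentiableAt (hU.mem_nhds hy)).hasFDerivAt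
  have hsymm : ∀ a b, f'' a b = f'' b a := fun a b =>
    second_derivative_symmetric_of_eventually hBev hf'diff.hasFDerivAt a b
  -- the inverse function
  have hginv : ContDiffAt ℝ 1 (fun y => (B y)⁻¹) x :=
    (contDiffAt_matrix_inv (B x) (hBinv x hx)).comp x (hB2.of_le one_le_two)
  have hgdiff : DifferentiableAt ℝ (fun y => (B y)⁻¹) x := hginv.differentiableAt one_ne_zero
  -- product rule
  have mulrule : ∀ p q : (Fin m → ℝ) → Matrix (Fin m) (Fin m) ℝ,
      DifferentiableAt ℝ p x → DifferentiableAt ℝ q x →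
      DifferentiableAt ℝ (fun y => p y * q y) x ∧
      ∀ a, fderiv ℝ (fun y => p y * q y) x a
        = fderiv ℝ p x a * q x + p x * fderiv ℝ q x a := by
    intro p q hp hq
    have hb := ((matMulL m).isBoundedBilinearMap).hasFDerivAt (p x, q x)
    have hc : HasFDerivAt (fun y => p y * q y)
        ((((matMulL m).isBoundedBilinearMap).deriv (p x, q x)).comp
          ((fderiv ℝ p x).prod (fderiv ℝ q x))) x :=
      by have := hb.comp x (hp.hasFDerivAt.prodMk hq.hasFDerivAt); exact this
    refine ⟨hc.differentiableAt, fun a => ?_⟩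
    rw [hc.fderiv]
    simp only [ContinuousLinearMap.comp_apply, ContinuousLinearMap.prod_apply,
      IsBoundedBilinearMap.deriv_apply, matMulL_apply]
    exact add_comm _ _
  -- derivative of the evaluation of fderiv B
  have happ : ∀ a : Fin m → ℝ, DifferentiableAt ℝ (fun y => fderiv ℝ B y a) x ∧
      ∀ b, fderiv ℝ (fun y => fderiv ℝ B y a) x b = f'' b a := by
    intro a
    have h := hf'diff.hasFDerivAt.clm_apply (hasFDerivAt_const a x)
    refine ⟨h.differentiableAt, fun b => ?_⟩
    erw [h.fderiv]
    simp
    rfl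
  -- derivative of the inverse
  have hBxdet : IsUnit (B x).det := (Matrix.isUnit_iff_isUnit_det (B x)).1 (hBinv x hx)
  have hgB : (fun y => (B y)⁻¹ * B y) =ᶠ[nhds x] fun _ => (1 : Matrix (Fin m) (Fin m) ℝ) := by
    filter_upwards [hxU] with y hy
    exact Matrix.nonsing_inv_mul (B y) ((Matrix.isUnit_iff_isUnit_det (B y)).1 (hBinv y hy))
  have h0 : ∀ a, fderiv ℝ (fun y => (B y)⁻¹ * B y) x a = 0 := by
    intro a
    rw [hgB.fderiv_eq, fderiv_fun_const]
    simp
  have hgderiv : ∀ a, fderiv ℝ (fun y => (B y)⁻¹) x a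
      = -((B x)⁻¹ * fderiv ℝ B x a * (B x)⁻¹) := by
    intro a
    have h1 := (mulrule (fun y => (B y)⁻¹) B hgdiff hBdiffAt).2 a
    rw [h0 a] at h1
    have h2 : fderiv ℝ (fun y => (B y)⁻¹) x a * B x = -((B x)⁻¹ * fderiv ℝ B x a) := by
      have := h1.symm
      linear_combination (norm := module) this
    calc fderiv ℝ (fun y => (B y)⁻¹) x a
        = fderiv ℝ (fun y => (B y)⁻¹) x a * (B x * (B x)⁻¹) := by
          rw [Matrix.mul_nonsing_inv (B x) hBxdet, mul_one]
      _ = fderiv ℝ (fun y => (B y)⁻¹) x a * B x * (B x)⁻¹ := by rw [mul_assoc]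
      _ = -((B x)⁻¹ * fderiv ℝ B x a) * (B x)⁻¹ := by rw [h2]
      _ = -((B x)⁻¹ * fderiv ℝ B x a * (B x)⁻¹) := by rw [neg_mul]
  -- differentiability and derivative of the Cartan connection
  have hCdiff : ∀ a, DifferentiableAt ℝ (fun y => rightCartan B y a) x := by
    intro a
    exact (mulrule (fun y => (B y)⁻¹) (fun y => fderiv ℝ B y a) hgdiff (happ a).1).1
  have hC : ∀ a b, fderiv ℝ (fun y => rightCartan B y a) x b
      = -(rightCartan B x b * rightCartan B x a) + (B x)⁻¹ * f'' b a := by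
    intro a b
    have h1 := (mulrule (fun y => (B y)⁻¹) (fun y => fderiv ℝ B y a) hgdiff (happ a).1).2 b
    rw [(happ a).2 b, hgderiv b] at h1
    have : (fun y => rightCartan B y a) = fun y => (B y)⁻¹ * fderiv ℝ B y a := rfl
    rw [this, h1, rightCartan, rightCartan]
    rw [neg_mul, mul_assoc]
    rfl
  -- derivative of the torsion
  have hT : ∀ a b c, fderiv ℝ (fun y => affineTorsion B y a b) x c
      = fderiv ℝ (fun y => rightCartan B y a) x c *ᵥ b
        - fderiv ℝ (fun y => rightCartan B y b) x c *ᵥ a := by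
    intro a b c
    have h1 : HasFDerivAt (fun y => rightCartan B y a *ᵥ b)
        ((mulVecL b).comp (fderiv ℝ (fun y => rightCartan B y a) x)) x :=
      (mulVecL b).hasFDerivAt.comp x (hCdiff a).hasFDerivAt
    have h2 : HasFDerivAt (fun y => rightCartan B y b *ᵥ a)
        ((mulVecL a).comp (fderiv ℝ (fun y => rightCartan B y b) x)) x :=
      (mulVecL a).hasFDerivAt.comp x (hCdiff b).hasFDerivAt
    have h3 := (h1.sub h2)
    have : (fun y => affineTorsion B y a b)
        = fun y => rightCartan B y a *ᵥ b - rightCartan B y b *ᵥ a := rfl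
    rw [this]
    erw [h3.fderiv]
    simp
  rw [hT v w u, hT w u v, hT u v w, hC v u, hC w u, hC w v, hC u v, hC u w, hC v w]
  rw [hsymm v u, hsymm w v, hsymm w u]
  simp only [Matrix.add_mulVec, Matrix.sub_mulVec, Matrix.neg_mulVec]
  abel
end

section
/- Let m ≥ 1, let a₁, …, a_m be real constants, let p be a positive even integer, and let N be a real number. On the open set U = { x ∈ ℝᵐ : a₁x₁ᵖ + ⋯ + a_m x_mᵖ > 0 } define λ(x) = (a₁x₁ᵖ + ⋯ + a_m x_mᵖ)^{N/p}, and let M(x) be the m×m Jacobian matrix of the map x ↦ x/λ(x), with entries M(x)ᵢⱼ = ∂/∂xᵢ ( xⱼ / λ(x) ). Then the characteristic polynomial of M(x) factors as det( γ·I − M(x) ) = ( γ − 1/λ(x) )^{m−1} · ( γ − (1−N)/λ(x) ); equivalently, the eigenvalues of M(x) are 1/λ(x) with multiplicity m−1 and (1−N)/λ(x) with multiplicity 1, i.e., (γλ − 1)^{m−1}(γλ − 1 + N) = 0. -/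
open Matrix in
lemma det_aux {m : ℕ} (hm : 1 ≤ m) (c : ℝ) (u v : Fin m → ℝ) :
    (Matrix.of fun i j => (if i = j then c else 0) + u i * v j).det
      = c ^ (m - 1) * (c + ∑ i, v i * u i) := by
  -- both sides continuous in c, equal for c ≠ 0
  have key : ∀ c : ℝ, c ≠ 0 →
      (Matrix.of fun i j => (if i = j then c else 0) + u i * v j).det
        = c ^ (m - 1) * (c + ∑ i, v i * u i) := by
    intro c hc
    have h1 : (Matrix.of fun i j => (if i = j then c else 0) + u i * v j)
        = c • (1 + replicateCol Unit (fun i => c⁻¹ * u i) * replicateRow Unit v) := by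
      ext i j
      simp only [Matrix.of_apply, Matrix.smul_apply, Matrix.add_apply,
        Matrix.one_apply, Matrix.mul_apply, Matrix.replicateCol_apply, Matrix.replicateRow_apply,
        Finset.univ_unique, Finset.sum_singleton, smul_eq_mul]
      rcases eq_or_ne i j with h | h <;> simp [h] <;> field_simp <;> ring
    rw [h1, Matrix.det_smul, Matrix.det_one_add_replicateCol_mul_replicateRow]
    have : v ⬝ᵥ (fun i => c⁻¹ * u i) = c⁻¹ * ∑ i, v i * u i := by
      simp [dotProduct, Finset.mul_sum, mul_comm, mul_assoc, mul_left_comm]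
    rw [this]
    have hcm : (c : ℝ) ^ m = c ^ (m - 1) * c := by
      conv_lhs => rw [← Nat.succ_pred_eq_of_pos hm]
      rw [pow_succ]
      congr 1
    simp only [Fintype.card_fin]
    field_simp [hcm]
    rw [hcm]
    ring
  rcases eq_or_ne c 0 with rfl | hc
  · have hcont1 : Continuous fun t : ℝ =>
        (Matrix.of fun i j => (if i = j then t else 0) + u i * v j).det := by
      apply Continuous.matrix_det
      apply continuous_pi; intro i; apply continuous_pi; intro j
      simp only [Matrix.of_apply]
      rcases eq_or_ne i j with h | h <;> simp [h] <;> fun_prop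
    have hcont2 : Continuous fun t : ℝ => t ^ (m - 1) * (t + ∑ i, v i * u i) := by
      fun_prop
    have := hcont1.ext_on (dense_compl_singleton (0:ℝ)) hcont2 (fun t ht => key t ht)
    exact congrFun this 0
  · exact key c hc

/-- For the Hölder norm `λ(x) = (a₁x₁ᵖ + ⋯ + a_m x_mᵖ)^{N/p}` and the
Jacobian matrix `M(x)ᵢⱼ = ∂ᵢ(xⱼ/λ(x))` of the renormalized position field `x ↦ x/λ(x)`,
the characteristic polynomial factors on the set where `a₁x₁ᵖ + ⋯ + a_m x_mᵖ > 0` as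
`det(γ·I − M(x)) = (γ − 1/λ(x))^{m−1} · (γ − (1−N)/λ(x))`, i.e. the eigenvalues are
`1/λ` with multiplicity `m−1` and `(1−N)/λ` with multiplicity `1`. -/
theorem holder_jacobian_charpoly (m : ℕ) (hm : 1 ≤ m) (a : Fin m → ℝ)
    (p : ℕ) (hp : 0 < p) (hpe : Even p) (N : ℝ)
    (lam : (Fin m → ℝ) → ℝ)
    (hlam : ∀ x, lam x = (∑ i, a i * x i ^ p) ^ (N / (p : ℝ)))
    (M : (Fin m → ℝ) → Matrix (Fin m) (Fin m) ℝ)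
    (hM : ∀ x i j, M x i j = fderiv ℝ (fun y => y j / lam y) x (Pi.single i 1)) :
    ∀ x : Fin m → ℝ, 0 < ∑ i, a i * x i ^ p →
      ∀ γ : ℝ,
        (γ • (1 : Matrix (Fin m) (Fin m) ℝ) - M x).det =
          (γ - 1 / lam x) ^ (m - 1) * (γ - (1 - N) / lam x) := by
  intro x hSx γ
  set S : (Fin m → ℝ) → ℝ := fun y => ∑ i, a i * y i ^ p with hSdef
  have hc : (0:ℝ) < S x := hSx
  have hcne : S x ≠ 0 := ne_of_gt hc
  have hpne : (p:ℝ) ≠ 0 := Nat.cast_ne_zero.mpr hp.ne'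
  set e : ℝ := -(N / (p:ℝ)) with he
  -- derivative of S
  set L : (Fin m → ℝ) →L[ℝ] ℝ :=
    ∑ i, (a i * ((p:ℝ) * x i ^ (p-1))) • (ContinuousLinearMap.proj i) with hL
  have hSder : HasFDerivAt S L x := by
    have h1 : ∀ i ∈ Finset.univ, HasFDerivAt (fun y : Fin m → ℝ => a i * y i ^ p)
        ((a i * ((p:ℝ) * x i ^ (p-1))) • (ContinuousLinearMap.proj i :
          (Fin m → ℝ) →L[ℝ] ℝ)) x := by
      intro i _
      have hd : HasDerivAt (fun t : ℝ => a i * t ^ p)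
          (a i * ((p:ℝ) * x i ^ (p-1))) (x i) := (hasDerivAt_pow p (x i)).const_mul (a i)
      exact hd.comp_hasFDerivAt (f := fun y : Fin m → ℝ => y i) x (hasFDerivAt_apply i x)
    simpa using HasFDerivAt.fun_sum h1
  -- derivative of S^e
  have hre : HasDerivAt (fun t : ℝ => t ^ e) (e * S x ^ (e - 1)) (S x) :=
    Real.hasDerivAt_rpow_const (Or.inl hcne)
  have hge : HasFDerivAt (fun y => S y ^ e) ((e * S x ^ (e - 1)) • L) x :=
    hre.comp_hasFDerivAt x hSder
  -- entries of M
  have hMent : ∀ i j, M x i j =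
      (if i = j then S x ^ e else 0)
        + x j * ((e * S x ^ (e - 1)) * (a i * ((p:ℝ) * x i ^ (p-1)))) := by
    intro i j
    have hj : HasFDerivAt (fun y : Fin m → ℝ => y j)
        (ContinuousLinearMap.proj j : (Fin m → ℝ) →L[ℝ] ℝ) x := by
      exact hasFDerivAt_apply j x
    have hmul : HasFDerivAt (fun y => y j * S y ^ e)
        (x j • ((e * S x ^ (e - 1)) • L)
          + (S x ^ e) • (ContinuousLinearMap.proj j)) x := hj.mul hge
    have hev : (fun y : Fin m → ℝ => y j / lam y) =ᶠ[nhds x]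
        (fun y => y j * S y ^ e) := by
      have hScont : Continuous S := by
        apply continuous_finset_sum; intro i _; fun_prop
      have hopen : {y : Fin m → ℝ | 0 < S y} ∈ nhds x :=
        (isOpen_lt continuous_const hScont).mem_nhds hc
      filter_upwards [hopen] with y hy
      rw [hlam, div_eq_mul_inv, he, Real.rpow_neg (le_of_lt hy)]
    have hfd : fderiv ℝ (fun y : Fin m → ℝ => y j / lam y) x
        = x j • ((e * S x ^ (e - 1)) • L)
          + (S x ^ e) • (ContinuousLinearMap.proj j) := by
      rw [hev.fderiv_eq, hmul.fderiv]
    rw [hM, hfd]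
    have hLval : L (Pi.single i 1) = a i * ((p:ℝ) * x i ^ (p-1)) := by
      rw [hL]
      simp [ContinuousLinearMap.sum_apply, Pi.single_apply, Finset.sum_ite_eq]
    simp only [ContinuousLinearMap.add_apply, ContinuousLinearMap.smul_apply,
      ContinuousLinearMap.proj_apply, hLval, smul_eq_mul, Pi.single_apply]
    rcases eq_or_ne i j with h | h <;> simp [h, eq_comm] <;> ring
  -- rewrite the matrix as scalar + rank one
  set u : Fin m → ℝ := fun i => N * S x ^ (e - 1) * (a i * x i ^ (p-1)) with hu
  have hmat : γ • (1 : Matrix (Fin m) (Fin m) ℝ) - M x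
      = Matrix.of fun i j => (if i = j then γ - S x ^ e else 0) + u i * x j := by
    ext i j
    simp only [Matrix.sub_apply, Matrix.smul_apply, Matrix.one_apply, smul_eq_mul,
      Matrix.of_apply, hMent i j, hu]
    have hep : e * (p:ℝ) = -N := by rw [he]; field_simp
    rcases eq_or_ne i j with h | h
    · simp only [h, eq_self_iff_true, if_true, if_pos rfl]
      linear_combination (-(S x ^ (e - 1) * a j * x j ^ (p - 1) * x j)) * hep
    · simp only [if_neg h]
      linear_combination (-(S x ^ (e - 1) * a i * x i ^ (p - 1) * x j)) * hep
  rw [hmat, det_aux hm]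
  -- compute the dot product
  have hsum : ∑ i, x i * u i = N * S x ^ e := by
    have h1 : ∀ i, x i * u i = N * S x ^ (e - 1) * (a i * x i ^ p) := by
      intro i
      have hpow : x i ^ (p - 1) * x i = x i ^ p := by
        rw [← pow_succ]
        congr 1
        omega
      simp only [hu]
      linear_combination (N * S x ^ (e - 1) * a i) * hpow
    rw [Finset.sum_congr rfl (fun i _ => h1 i), ← Finset.mul_sum]
    have h2 : S x ^ (e - 1) * S x = S x ^ e := by
      rw [← Real.rpow_add_one hcne (e - 1)]
      congr 1
      ring
    show N * S x ^ (e - 1) * S x = N * S x ^ e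
    rw [mul_assoc, h2]
  rw [hsum]
  -- relate S x ^ e to lam
  have hlamx : lam x = S x ^ (N / (p:ℝ)) := hlam x
  have hlampos : 0 < lam x := by rw [hlamx]; exact Real.rpow_pos_of_pos hc _
  have hSe : S x ^ e = 1 / lam x := by
    rw [he, Real.rpow_neg hc.le, hlamx, one_div]
  rw [hSe]
  have hlne : lam x ≠ 0 := ne_of_gt hlampos
  congr 1
  field_simp
  ring
end

section
/- Let a, b, c, ε be real constants, p a positive even integer, and N a real number. On the open set U = { x ∈ ℝ⁴ : a x₁ᵖ + b x₂ᵖ + c x₃ᵖ + ε x₄ᵖ > 0 } define λ(x) = (a x₁ᵖ + b x₂ᵖ + c x₃ᵖ + ε x₄ᵖ)^{N/p}, and let M(x) be the 4×4 Jacobian matrix of x ↦ x/λ(x). Then the four similarity invariants of M(x) (the coefficients of its characteristic polynomial γ⁴ − Mγ³ + Gγ² − Aγ + K) are: Mean curvature M = trace M(x) = (4 − N)/λ(x); Gauss curvature G = (6 − 3N)/λ(x)² (the sum of the principal 2×2 minors); Cubic curvature A = (4 − 3N)/λ(x)³ (the sum of the principal 3×3 minors); Quartic curvature K = det M(x) =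 (1 − N)/λ(x)⁴. In particular, these invariants are independent of the anisotropy constants a, b, c, ε and of the exponent p, and the Mean curvature vanishes exactly when N = 4. -/
private lemma trace_fin_four_aux (A : Matrix (Fin 4) (Fin 4) ℝ) :
    A.trace = A 0 0 + A 1 1 + A 2 2 + A 3 3 := by
  simp [Matrix.trace, Fin.sum_univ_four]

private lemma det_fin_four_aux (A : Matrix (Fin 4) (Fin 4) ℝ) : A.det =
    A 0 0 * (A 1 1*(A 2 2*A 3 3 - A 2 3*A 3 2) - A 1 2*(A 2 1*A 3 3 - A 2 3*A 3 1)
      + A 1 3*(A 2 1*A 3 2 - A 2 2*A 3 1))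
  - A 0 1 * (A 1 0*(A 2 2*A 3 3 - A 2 3*A 3 2) - A 1 2*(A 2 0*A 3 3 - A 2 3*A 3 0)
      + A 1 3*(A 2 0*A 3 2 - A 2 2*A 3 0))
  + A 0 2 * (A 1 0*(A 2 1*A 3 3 - A 2 3*A 3 1) - A 1 1*(A 2 0*A 3 3 - A 2 3*A 3 0)
      + A 1 3*(A 2 0*A 3 1 - A 2 1*A 3 0))
  - A 0 3 * (A 1 0*(A 2 1*A 3 2 - A 2 2*A 3 1) - A 1 1*(A 2 0*A 3 2 - A 2 2*A 3 0)
      + A 1 2*(A 2 0*A 3 1 - A 2 1*A 3 0)) := by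
  rw [Matrix.det_succ_row_zero, Fin.sum_univ_four]
  simp [Matrix.det_fin_three, Matrix.submatrix_apply, Fin.succAbove, Fin.lt_def, Fin.sum_univ_succ,
    show (Fin.succ 2 : Fin 4) = 3 from rfl, show ((3:Fin 4):ℕ) = 3 from rfl,
    show (Fin.castSucc 2 : Fin 4) = 2 from rfl]
  ring

set_option maxHeartbeats 4000000 in
/-- For the 4D Hölder norm `λ(x) = (a x₁ᵖ + b x₂ᵖ + c x₃ᵖ + ε x₄ᵖ)^{N/p}`
and the Jacobian matrix `M(x)` of `x ↦ x/λ(x)`, the similarity invariants (coefficients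
of the characteristic polynomial `γ⁴ − Mγ³ + Gγ² − Aγ + K`) are:
Mean curvature `M = trace M(x) = (4−N)/λ`, Gauss curvature `G = (6−3N)/λ²`,
Cubic curvature `A = (4−3N)/λ³`, Quartic curvature `K = det M(x) = (1−N)/λ⁴`; they are
independent of `a, b, c, ε, p`, and the Mean curvature vanishes exactly when `N = 4`. -/
theorem holder_jacobian_invariants_4D (a b c ε : ℝ)
    (p : ℕ) (hp : 0 < p) (hpe : Even p) (N : ℝ)
    (lam : (Fin 4 → ℝ) → ℝ)
    (hlam : ∀ x : Fin 4 → ℝ,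
      lam x = (a * x 0 ^ p + b * x 1 ^ p + c * x 2 ^ p + ε * x 3 ^ p) ^ (N / (p : ℝ)))
    (M : (Fin 4 → ℝ) → Matrix (Fin 4) (Fin 4) ℝ)
    (hM : ∀ x i j, M x i j = fderiv ℝ (fun y => y j / lam y) x (Pi.single i 1)) :
    ∀ x : Fin 4 → ℝ, 0 < a * x 0 ^ p + b * x 1 ^ p + c * x 2 ^ p + ε * x 3 ^ p →
      (M x).trace = (4 - N) / lam x ∧
      (M x).det = (1 - N) / lam x ^ 4 ∧
      (∀ γ : ℝ,
        (γ • (1 : Matrix (Fin 4) (Fin 4) ℝ) - M x).det =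
          γ ^ 4 - ((4 - N) / lam x) * γ ^ 3 + ((6 - 3 * N) / lam x ^ 2) * γ ^ 2
            - ((4 - 3 * N) / lam x ^ 3) * γ + (1 - N) / lam x ^ 4) ∧
      ((M x).trace = 0 ↔ N = 4) := by
  intro x hx
  have hpR : ((p : ℝ)) ≠ 0 := Nat.cast_ne_zero.mpr hp.ne'
  set s : ℝ := a * x 0 ^ p + b * x 1 ^ p + c * x 2 ^ p + ε * x 3 ^ p with hsdef
  have hs : 0 < s := hx
  set r : ℝ := N / (p : ℝ) with hr
  have hlamx : lam x = s ^ r := hlam x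
  have hl : 0 < lam x := by rw [hlamx]; exact Real.rpow_pos_of_pos hs r
  have hpow : ∀ i : Fin 4, HasFDerivAt (fun y : Fin 4 → ℝ => y i ^ p)
      (((p:ℝ) * x i ^ (p-1)) • (ContinuousLinearMap.proj i : (Fin 4 → ℝ) →L[ℝ] ℝ)) x := by
    intro i
    have h1 : HasFDerivAt (fun y : Fin 4 → ℝ => y i)
        (ContinuousLinearMap.proj i : (Fin 4 → ℝ) →L[ℝ] ℝ) x :=
      (ContinuousLinearMap.proj i : (Fin 4 → ℝ) →L[ℝ] ℝ).hasFDerivAt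
    exact (hasDerivAt_pow p (x i)).comp_hasFDerivAt x h1
  set L : (Fin 4 → ℝ) →L[ℝ] ℝ :=
    a • (((p:ℝ) * x 0 ^ (p-1)) • (ContinuousLinearMap.proj 0 : (Fin 4 → ℝ) →L[ℝ] ℝ))
    + b • (((p:ℝ) * x 1 ^ (p-1)) • (ContinuousLinearMap.proj 1 : (Fin 4 → ℝ) →L[ℝ] ℝ))
    + c • (((p:ℝ) * x 2 ^ (p-1)) • (ContinuousLinearMap.proj 2 : (Fin 4 → ℝ) →L[ℝ] ℝ))
    + ε • (((p:ℝ) * x 3 ^ (p-1)) • (ContinuousLinearMap.proj 3 : (Fin 4 → ℝ) →L[ℝ] ℝ)) with hLdef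
  have hSd : HasFDerivAt
      (fun y : Fin 4 → ℝ => a * y 0 ^ p + b * y 1 ^ p + c * y 2 ^ p + ε * y 3 ^ p) L x :=
    ((((hpow 0).const_mul a).add ((hpow 1).const_mul b)).add ((hpow 2).const_mul c)).add
      ((hpow 3).const_mul ε)
  have hlamd : HasFDerivAt lam ((r * s ^ (r-1)) • L) x := by
    have hfun : lam = fun y : Fin 4 → ℝ =>
        (a * y 0 ^ p + b * y 1 ^ p + c * y 2 ^ p + ε * y 3 ^ p) ^ r := funext hlam
    rw [hfun]
    exact hSd.rpow_const (Or.inl hs.ne')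
  have hinv : HasFDerivAt (fun y => (lam y)⁻¹)
      ((-((lam x)^2)⁻¹) • ((r * s ^ (r-1)) • L)) x :=
    (hasDerivAt_inv hl.ne').comp_hasFDerivAt x hlamd
  set u : Fin 4 → ℝ := ![a, b, c, ε] with hu
  have key : ∀ i j : Fin 4, M x i j =
      (if i = j then 1 else 0) / lam x - N * (u i * x i ^ (p-1) * x j) / (s * lam x) := by
    intro i j
    have hj : HasFDerivAt (fun y : Fin 4 → ℝ => y j)
        (ContinuousLinearMap.proj j : (Fin 4 → ℝ) →L[ℝ] ℝ) x :=
      (ContinuousLinearMap.proj j : (Fin 4 → ℝ) →L[ℝ] ℝ).hasFDerivAt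
    have hdiv : HasFDerivAt (fun y : Fin 4 → ℝ => y j / lam y)
        (x j • ((-((lam x)^2)⁻¹) • ((r * s ^ (r-1)) • L))
          + (lam x)⁻¹ • (ContinuousLinearMap.proj j : (Fin 4 → ℝ) →L[ℝ] ℝ)) x := by
      simp only [div_eq_mul_inv]
      exact hj.mul hinv
    rw [hM x i j, hdiv.fderiv]
    have hsr : s ^ (r - 1) = lam x / s := by
      rw [hlamx, Real.rpow_sub hs, Real.rpow_one]
    simp only [hLdef, ContinuousLinearMap.add_apply, ContinuousLinearMap.smul_apply,
      ContinuousLinearMap.coe_smul', Pi.smul_apply, ContinuousLinearMap.proj_apply,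
      Pi.single_apply, smul_eq_mul]
    rw [hsr, hr]
    have hln : lam x ≠ 0 := hl.ne'
    have hsn : s ≠ 0 := hs.ne'
    clear_value L u s r
    clear hM hlam hdiv hinv hlamd hSd hpow hj hLdef hlamx hsdef hr hsr hs hl hx
    fin_cases i <;> fin_cases j <;>
      simp [hu] <;> field_simp <;> ring
  -- rewrite entries via a rank-one vector v
  have hxp : ∀ i : Fin 4, x i ^ (p-1) * x i = x i ^ p := by
    intro i
    have h1 : p - 1 + 1 = p := Nat.succ_pred_eq_of_pos hp
    rw [← pow_succ, h1]
  set w : Fin 4 → ℝ := fun i => x i ^ (p-1) with hw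
  have hsw : s = a * (w 0 * x 0) + b * (w 1 * x 1) + c * (w 2 * x 2) + ε * (w 3 * x 3) := by
    rw [hsdef]
    simp only [hw, hxp]
  have hln : lam x ≠ 0 := hl.ne'
  have hsn : s ≠ 0 := hs.ne'
  set v : Fin 4 → ℝ := fun i => N * u i * w i / (s * lam x) with hv
  have key2 : ∀ i j : Fin 4, M x i j = (if i = j then 1 else 0) / lam x - v i * x j := by
    intro i j
    rw [key i j, hv]
    simp only [hw]
    ring
  have hvx : v 0 * x 0 + v 1 * x 1 + v 2 * x 2 + v 3 * x 3 = N / lam x := by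
    have h2 : v 0 * x 0 + v 1 * x 1 + v 2 * x 2 + v 3 * x 3 =
        N * (u 0 * (w 0 * x 0) + u 1 * (w 1 * x 1) + u 2 * (w 2 * x 2) + u 3 * (w 3 * x 3))
          / (s * lam x) := by
      rw [hv]; ring
    have h3 : u 0 * (w 0 * x 0) + u 1 * (w 1 * x 1) + u 2 * (w 2 * x 2) + u 3 * (w 3 * x 3) = s := by
      rw [hu, hsw]
      norm_num [Matrix.cons_val_zero, Matrix.cons_val_one, Matrix.head_cons]
      rfl
    rw [h2, h3]
    field_simp
  obtain ⟨q, hq⟩ : ∃ q : ℝ, (lam x)⁻¹ = q := ⟨_, rfl⟩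
  have key3 : ∀ i j : Fin 4, M x i j = (if i = j then 1 else 0) * q - v i * x j := by
    intro i j
    rw [key2 i j, div_eq_mul_inv, hq]
  have hNq : v 0 * x 0 + v 1 * x 1 + v 2 * x 2 + v 3 * x 3 = N * q := by
    rw [hvx, div_eq_mul_inv, hq]
  clear_value v w u s r
  clear hM hlam key key2 hv hw hu hsw hvx hsdef hr hlamx hxp hpow hSd hlamd hinv hLdef hsn hs hx hpe hpR hp
  clear_value L
  clear L
  have htrace : (M x).trace = (4 - N) / lam x := by
    rw [trace_fin_four_aux, div_eq_mul_inv, hq]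
    simp only [key3]
    simp only [if_true, if_pos, reduceIte, Fin.reduceEq, mul_one, mul_zero, zero_mul,
      one_mul, zero_sub, sub_zero]
    linear_combination -hNq
  refine ⟨htrace, ?_, ?_, ?_⟩
  · rw [det_fin_four_aux, div_eq_mul_inv, ← inv_pow, hq]
    simp only [key3]
    simp only [if_true, if_pos, reduceIte, Fin.reduceEq, mul_one, mul_zero, zero_mul,
      one_mul, zero_sub, sub_zero]
    linear_combination (-q^3) * hNq
  · intro γ
    rw [det_fin_four_aux]
    simp only [div_eq_mul_inv, ← inv_pow, hq]
    simp only [Matrix.sub_apply, Matrix.smul_apply, Matrix.one_apply, smul_eq_mul, key3]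
    simp only [if_true, if_pos, reduceIte, Fin.reduceEq, mul_one, mul_zero, zero_mul,
      one_mul, zero_sub, sub_zero]
    linear_combination (γ - q)^3 * hNq
  · rw [htrace, div_eq_zero_iff]
    constructor
    · rintro (h | h)
      · linarith
      · exact absurd h hln
    · intro h; left; linarith
end

section
/- Let a, b, c be real constants, p a positive even integer, and n a real number. On the open set U = { x ∈ ℝ³ : a x₁ᵖ + b x₂ᵖ + c x₃ᵖ > 0 } define λ(x) = (a x₁ᵖ + b x₂ᵖ + c x₃ᵖ)^{n/p}, and let M(x) be the 3×3 Jacobian matrix of x ↦ x/λ(x). Then the similarity invariants of M(x) (the coefficients of its characteristic polynomial γ³ − Mγ² + Gγ − A) are: Mean curvature M = trace M(x) = (3 − n)/λ(x); Gauss curvature G = (3 − 2n)/λ(x)²; Cubic curvature A = det M(x) = (1 − n)/λ(x)³. These curvature invariants are independent of the anisotropy coefficients a, b, c and of the exponent p. -/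
set_option maxHeartbeats 1000000


/-- For the 3D Hölder norm `λ(x) = (a x₁ᵖ + b x₂ᵖ + c x₃ᵖ)^{n/p}` and the
Jacobian matrix `M(x)` of `x ↦ x/λ(x)`, the similarity invariants (coefficients of the
characteristic polynomial `γ³ − Mγ² + Gγ − A`) are: Mean curvature
`M = trace M(x) = (3−n)/λ`, Gauss curvature `G = (3−2n)/λ²`, Cubic curvature
`A = det M(x) = (1−n)/λ³`; they are independent of the anisotropy coefficients
`a, b, c` and the exponent `p`. -/
theorem holder_jacobian_invariants_3D (a b c : ℝ)
    (p : ℕ) (hp : 0 < p) (hpe : Even p) (n : ℝ)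
    (lam : (Fin 3 → ℝ) → ℝ)
    (hlam : ∀ x : Fin 3 → ℝ,
      lam x = (a * x 0 ^ p + b * x 1 ^ p + c * x 2 ^ p) ^ (n / (p : ℝ)))
    (M : (Fin 3 → ℝ) → Matrix (Fin 3) (Fin 3) ℝ)
    (hM : ∀ x i j, M x i j = fderiv ℝ (fun y => y j / lam y) x (Pi.single i 1)) :
    ∀ x : Fin 3 → ℝ, 0 < a * x 0 ^ p + b * x 1 ^ p + c * x 2 ^ p →
      (M x).trace = (3 - n) / lam x ∧
      (M x).det = (1 - n) / lam x ^ 3 ∧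
      (∀ γ : ℝ,
        (γ • (1 : Matrix (Fin 3) (Fin 3) ℝ) - M x).det =
          γ ^ 3 - ((3 - n) / lam x) * γ ^ 2 + ((3 - 2 * n) / lam x ^ 2) * γ
            - (1 - n) / lam x ^ 3) := by
  have hl : lam = fun x => (a * x 0 ^ p + b * x 1 ^ p + c * x 2 ^ p) ^ (n / (p : ℝ)) :=
    funext hlam
  subst hl
  beta_reduce at hM
  intro x hx
  beta_reduce
  obtain ⟨k, rfl⟩ : ∃ k, p = k + 1 := ⟨p - 1, (Nat.succ_pred_eq_of_pos hp).symm⟩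
  have hp' : ((k + 1 : ℕ) : ℝ) ≠ 0 := by positivity
  set g : ℝ := a * x 0 ^ (k+1) + b * x 1 ^ (k+1) + c * x 2 ^ (k+1) with hgdef
  have hg : 0 < g := hx
  set s : ℝ := g ^ (n / ((k+1 : ℕ) : ℝ)) with hsdef
  set t : ℝ := g ^ (n / ((k+1 : ℕ) : ℝ) - 1) with htdef
  have hspos : 0 < s := Real.rpow_pos_of_pos hg _
  have hs : s ≠ 0 := hspos.ne'
  have ht : t * g = s := by
    simp only [htdef, hsdef]
    rw [← Real.rpow_add_one hg.ne' (n / ((k+1:ℕ) : ℝ) - 1)]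
    norm_num
  have hcoord : ∀ m : Fin 3, HasFDerivAt (fun y : Fin 3 → ℝ => y m)
      (ContinuousLinearMap.proj m : (Fin 3 → ℝ) →L[ℝ] ℝ) x := fun m => hasFDerivAt_apply m x
  have hpow : ∀ m : Fin 3, HasFDerivAt (fun y : Fin 3 → ℝ => y m ^ (k+1))
      ((((k+1 : ℕ) : ℝ) * x m ^ k) • (ContinuousLinearMap.proj m : (Fin 3 → ℝ) →L[ℝ] ℝ)) x :=
    fun m => by
      have h1 : HasDerivAt (fun z : ℝ => z ^ (k+1)) (((k+1 : ℕ) : ℝ) * x m ^ k) (x m) := by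
        simpa using (hasDerivAt_pow (k+1) (x m))
      exact h1.comp_hasFDerivAt x (hcoord m)
  have hf : HasFDerivAt (fun y : Fin 3 → ℝ => a * y 0 ^ (k+1) + b * y 1 ^ (k+1) + c * y 2 ^ (k+1))
      (a • ((((k+1 : ℕ) : ℝ) * x 0 ^ k) • (ContinuousLinearMap.proj 0 : (Fin 3 → ℝ) →L[ℝ] ℝ)) +
       b • ((((k+1 : ℕ) : ℝ) * x 1 ^ k) • (ContinuousLinearMap.proj 1 : (Fin 3 → ℝ) →L[ℝ] ℝ)) +
       c • ((((k+1 : ℕ) : ℝ) * x 2 ^ k) • (ContinuousLinearMap.proj 2 : (Fin 3 → ℝ) →L[ℝ] ℝ))) x :=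
    (((hpow 0).const_mul a).add ((hpow 1).const_mul b)).add ((hpow 2).const_mul c)
  have hlam' := hf.rpow_const (p := n / ((k+1:ℕ) : ℝ)) (Or.inl hg.ne')
  have hinv := (hasDerivAt_inv hs).comp_hasFDerivAt x hlam'
  have hdiv : ∀ j : Fin 3, HasFDerivAt
      (fun y : Fin 3 → ℝ => y j / (a * y 0 ^ (k+1) + b * y 1 ^ (k+1) + c * y 2 ^ (k+1)) ^ (n / ((k+1:ℕ) : ℝ)))
      ((x j) • ((-(s^2)⁻¹) • ((n / ((k+1:ℕ) : ℝ) * t) •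
        (a • ((((k+1 : ℕ) : ℝ) * x 0 ^ k) • (ContinuousLinearMap.proj 0 : (Fin 3 → ℝ) →L[ℝ] ℝ)) +
         b • ((((k+1 : ℕ) : ℝ) * x 1 ^ k) • (ContinuousLinearMap.proj 1 : (Fin 3 → ℝ) →L[ℝ] ℝ)) +
         c • ((((k+1 : ℕ) : ℝ) * x 2 ^ k) • (ContinuousLinearMap.proj 2 : (Fin 3 → ℝ) →L[ℝ] ℝ)))))
        + s⁻¹ • (ContinuousLinearMap.proj j : (Fin 3 → ℝ) →L[ℝ] ℝ)) x := by
    intro j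
    have := (hcoord j).mul hinv
    simp only [div_eq_mul_inv]
    exact this
  have key : ∀ i j : Fin 3, M x i j =
      s⁻¹ * (if j = i then 1 else 0) -
        x j * (n * t * (a * x 0 ^ k * (if (0:Fin 3) = i then 1 else 0)
          + b * x 1 ^ k * (if (1:Fin 3) = i then 1 else 0)
          + c * x 2 ^ k * (if (2:Fin 3) = i then 1 else 0))) / s^2 := by
    intro i j
    rw [hM, (hdiv j).fderiv]
    simp only [ContinuousLinearMap.add_apply, ContinuousLinearMap.coe_smul', Pi.smul_apply,
      ContinuousLinearMap.proj_apply, smul_eq_mul, Pi.single_apply]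
    split_ifs <;> field_simp <;> ring
  have hsum : t * (a * (x 0 ^ k * x 0) + b * (x 1 ^ k * x 1) + c * (x 2 ^ k * x 2)) = s := by
    rw [← ht, hgdef]; ring
  refine ⟨?_, ?_, ?_⟩
  · rw [Matrix.trace_fin_three, key 0 0, key 1 1, key 2 2]
    norm_num [Fin.ext_iff]
    field_simp
    linear_combination (-n) * hsum
  · rw [Matrix.det_fin_three]
    simp only [key]
    norm_num [Fin.ext_iff]
    field_simp
    linear_combination (-(n * s^2)) * hsum
  · intro γ
    rw [Matrix.det_fin_three]
    simp only [Matrix.sub_apply, Matrix.smul_apply, Matrix.one_apply, smul_eq_mul, key]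
    norm_num [Fin.ext_iff]
    field_simp
    linear_combination (n * (γ * s^2 - s)^2) * hsum
end

section
/- Let U ⊆ ℝᵈ be open, let φ, χ : U → ℝ be C² functions, let a, ε be real constants and p a positive even integer, and suppose λ(x) = ( a·φ(x)ᵖ + ε·χ(x)ᵖ )^{2/p} is defined and nonvanishing on U (i.e., aφᵖ + εχᵖ > 0 on U). Define the 1-form J with components J_k = ( φ ∂_k χ − χ ∂_k φ ) / λ. Then J is closed: ∂_j J_k − ∂_k J_j = 0 on U for all indices j, k; i.e., dJ = d( (φ dχ − χ dφ)/λ ) = 0, even though neither term φ dχ/λ nor χ dφ/λ need be closed. -/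
/-- Let `φ, χ : U → ℝ` be C² on an open `U ⊆ ℝᵈ`, and let
`λ = (aφᵖ + εχᵖ)^{2/p}` be a nonvanishing Hölder norm on `U` (positive base).  Then the
1-form `J` with components `J_k = (φ ∂_k χ − χ ∂_k φ)/λ` is closed on `U`:
`∂_j J_k − ∂_k J_j = 0`, even though neither term `φ dχ/λ` nor `χ dφ/λ` need be closed. -/
theorem holder_current_closed (d : ℕ) (U : Set (Fin d → ℝ)) (hU : IsOpen U)
    (φ χ : (Fin d → ℝ) → ℝ)
    (hφ : ContDiffOn ℝ 2 φ U) (hχ : ContDiffOn ℝ 2 χ U)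
    (a ε : ℝ) (p : ℕ) (hp : 0 < p) (hpe : Even p)
    (hpos : ∀ x ∈ U, 0 < a * φ x ^ p + ε * χ x ^ p)
    (lam : (Fin d → ℝ) → ℝ)
    (hlam : ∀ x, lam x = (a * φ x ^ p + ε * χ x ^ p) ^ ((2 : ℝ) / (p : ℝ)))
    (J : Fin d → (Fin d → ℝ) → ℝ)
    (hJ : ∀ k x, J k x =
      (φ x * fderiv ℝ χ x (Pi.single k 1) - χ x * fderiv ℝ φ x (Pi.single k 1)) / lam x) :
    ∀ x ∈ U, ∀ j k : Fin d,
      fderiv ℝ (J k) x (Pi.single j 1) - fderiv ℝ (J j) x (Pi.single k 1) = 0 := by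
  intro x hx j k
  have hxU : U ∈ nhds x := hU.mem_nhds hx
  have hφx : ContDiffAt ℝ 2 φ x := hφ.contDiffAt hxU
  have hχx : ContDiffAt ℝ 2 χ x := hχ.contDiffAt hxU
  have hφd : DifferentiableAt ℝ φ x := hφx.differentiableAt two_ne_zero
  have hχd : DifferentiableAt ℝ χ x := hχx.differentiableAt two_ne_zero
  have hφ2 : DifferentiableAt ℝ (fderiv ℝ φ) x :=
    (hφx.fderiv_right (m := 1) (by norm_num)).differentiableAt one_ne_zero
  have hχ2 : DifferentiableAt ℝ (fderiv ℝ χ) x :=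
    (hχx.fderiv_right (m := 1) (by norm_num)).differentiableAt one_ne_zero
  have hB : 0 < a * φ x ^ p + ε * χ x ^ p := hpos x hx
  have hlampos : 0 < lam x := by
    rw [hlam x]; exact Real.rpow_pos_of_pos hB _
  -- derivative of the base function
  have hBase : HasFDerivAt (fun y => a * φ y ^ p + ε * χ y ^ p)
      (a • (((p : ℝ) * φ x ^ (p-1)) • fderiv ℝ φ x)
        + ε • (((p : ℝ) * χ x ^ (p-1)) • fderiv ℝ χ x)) x := by
    have h1 : HasFDerivAt (fun y => φ y ^ p) (((p : ℝ) * φ x ^ (p-1)) • fderiv ℝ φ x) x :=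
      (hasDerivAt_pow p (φ x)).comp_hasFDerivAt x hφd.hasFDerivAt
    have h2 : HasFDerivAt (fun y => χ y ^ p) (((p : ℝ) * χ x ^ (p-1)) • fderiv ℝ χ x) x :=
      (hasDerivAt_pow p (χ x)).comp_hasFDerivAt x hχd.hasFDerivAt
    exact (h1.const_mul a).add (h2.const_mul ε)
  -- derivative of lam
  have hlamd : HasFDerivAt lam
      ((((2:ℝ)/(p:ℝ)) * (a * φ x ^ p + ε * χ x ^ p) ^ ((2:ℝ)/(p:ℝ) - 1)) •
        (a • (((p : ℝ) * φ x ^ (p-1)) • fderiv ℝ φ x)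
          + ε • (((p : ℝ) * χ x ^ (p-1)) • fderiv ℝ χ x))) x := by
    have hfun : lam = fun y => (a * φ y ^ p + ε * χ y ^ p) ^ ((2:ℝ)/(p:ℝ)) := funext hlam
    rw [hfun]
    exact hBase.rpow_const (Or.inl hB.ne')
  have hinv : HasFDerivAt (fun y => (lam y)⁻¹)
      ((-((lam x)^2)⁻¹) •
        ((((2:ℝ)/(p:ℝ)) * (a * φ x ^ p + ε * χ x ^ p) ^ ((2:ℝ)/(p:ℝ) - 1)) •
          (a • (((p : ℝ) * φ x ^ (p-1)) • fderiv ℝ φ x)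
            + ε • (((p : ℝ) * χ x ^ (p-1)) • fderiv ℝ χ x)))) x := by
    have := (hasDerivAt_inv hlampos.ne').comp_hasFDerivAt x hlamd
    exact this
  -- derivatives of the partial derivative functions
  have happφ : ∀ m : Fin d, HasFDerivAt (fun y => fderiv ℝ φ y (Pi.single m 1))
      ((ContinuousLinearMap.apply ℝ ℝ ((Pi.single m 1 : Fin d → ℝ))).comp
        (fderiv ℝ (fderiv ℝ φ) x)) x := by
    intro m
    have := (ContinuousLinearMap.apply ℝ ℝ ((Pi.single m 1 : Fin d → ℝ))).hasFDerivAt.comp x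
      hφ2.hasFDerivAt
    exact this
  have happχ : ∀ m : Fin d, HasFDerivAt (fun y => fderiv ℝ χ y (Pi.single m 1))
      ((ContinuousLinearMap.apply ℝ ℝ ((Pi.single m 1 : Fin d → ℝ))).comp
        (fderiv ℝ (fderiv ℝ χ) x)) x := by
    intro m
    have := (ContinuousLinearMap.apply ℝ ℝ ((Pi.single m 1 : Fin d → ℝ))).hasFDerivAt.comp x
      hχ2.hasFDerivAt
    exact this
  -- key scalar formula for the derivative of J m in direction n
  have key : ∀ m n : Fin d, fderiv ℝ (J m) x (Pi.single n 1) =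
      (φ x * fderiv ℝ χ x (Pi.single m 1) - χ x * fderiv ℝ φ x (Pi.single m 1)) *
        (-((lam x)^2)⁻¹ * (((2:ℝ)/(p:ℝ)) * (a * φ x ^ p + ε * χ x ^ p) ^ ((2:ℝ)/(p:ℝ) - 1) *
          (a * ((p : ℝ) * φ x ^ (p-1) * fderiv ℝ φ x (Pi.single n 1))
            + ε * ((p : ℝ) * χ x ^ (p-1) * fderiv ℝ χ x (Pi.single n 1)))))
      + (lam x)⁻¹ *
        ((φ x * fderiv ℝ (fderiv ℝ χ) x (Pi.single n 1) (Pi.single m 1)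
            + fderiv ℝ χ x (Pi.single m 1) * fderiv ℝ φ x (Pi.single n 1))
          - (χ x * fderiv ℝ (fderiv ℝ φ) x (Pi.single n 1) (Pi.single m 1)
            + fderiv ℝ φ x (Pi.single m 1) * fderiv ℝ χ x (Pi.single n 1))) := by
    intro m n
    have hN : HasFDerivAt
        (fun y => φ y * fderiv ℝ χ y (Pi.single m 1) - χ y * fderiv ℝ φ y (Pi.single m 1))
        ((φ x • ((ContinuousLinearMap.apply ℝ ℝ ((Pi.single m 1 : Fin d → ℝ))).comp
            (fderiv ℝ (fderiv ℝ χ) x))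
          + fderiv ℝ χ x (Pi.single m 1) • fderiv ℝ φ x)
         - (χ x • ((ContinuousLinearMap.apply ℝ ℝ ((Pi.single m 1 : Fin d → ℝ))).comp
            (fderiv ℝ (fderiv ℝ φ) x))
          + fderiv ℝ φ x (Pi.single m 1) • fderiv ℝ χ x)) x :=
      (hφd.hasFDerivAt.mul (happχ m)).sub (hχd.hasFDerivAt.mul (happφ m))
    have hfun : J m = fun y =>
        (φ y * fderiv ℝ χ y (Pi.single m 1) - χ y * fderiv ℝ φ y (Pi.single m 1)) *
          (lam y)⁻¹ := by
      funext y; rw [hJ m y, div_eq_mul_inv]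
    have hM : HasFDerivAt (fun y =>
        (φ y * fderiv ℝ χ y (Pi.single m 1) - χ y * fderiv ℝ φ y (Pi.single m 1)) *
          (lam y)⁻¹) _ x := hN.mul hinv
    rw [hfun, hM.fderiv]
    simp only [ContinuousLinearMap.add_apply, ContinuousLinearMap.smul_apply,
      ContinuousLinearMap.coe_comp', Function.comp_apply, ContinuousLinearMap.apply_apply,
      ContinuousLinearMap.sub_apply, smul_eq_mul]
  rw [key k j, key j k]
  -- symmetry of second derivatives
  have hsφ : fderiv ℝ (fderiv ℝ φ) x (Pi.single j 1) (Pi.single k 1)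
      = fderiv ℝ (fderiv ℝ φ) x (Pi.single k 1) (Pi.single j 1) :=
    (hφx.isSymmSndFDerivAt (by simp)) _ _
  have hsχ : fderiv ℝ (fderiv ℝ χ) x (Pi.single j 1) (Pi.single k 1)
      = fderiv ℝ (fderiv ℝ χ) x (Pi.single k 1) (Pi.single j 1) :=
    (hχx.isSymmSndFDerivAt (by simp)) _ _
  rw [hsφ, hsχ]
  -- scalar algebra
  set c := (a * φ x ^ p + ε * χ x ^ p) ^ ((2:ℝ)/(p:ℝ) - 1) with hc
  have hc0 : 0 < c := Real.rpow_pos_of_pos hB _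
  have hLc : lam x = c * (a * φ x ^ p + ε * χ x ^ p) := by
    rw [hlam x, hc, ← Real.rpow_add_one hB.ne']
    norm_num
  have hφp : φ x ^ p = φ x ^ (p-1) * φ x := by
    conv_lhs => rw [← Nat.sub_add_cancel hp, pow_succ]
  have hχp : χ x ^ p = χ x ^ (p-1) * χ x := by
    conv_lhs => rw [← Nat.sub_add_cancel hp, pow_succ]
  have hp0 : (p:ℝ) ≠ 0 := Nat.cast_ne_zero.mpr hp.ne'
  have hB0 : a * (φ x ^ (p-1) * φ x) + ε * (χ x ^ (p-1) * χ x) ≠ 0 := by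
    rw [← hφp, ← hχp]; exact hB.ne'
  rw [hLc, hφp, hχp]
  field_simp
  ring
end
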